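/- Let H be a real Hilbert space, f = f₁ − f₂ : H → ℝ a DC function with global codifferential [d̲f(x*), d̄f(x*)] at a point x* ∈ H, and C ⊆ d̄f(x*) a nonempty set with d̄f(x*) = cl conv C. Then f is bounded below on H if and only if there exists ξ ∈ ℝ such that for every z ∈ C the set ([ξ, +∞) × {0}) ∩ (d̲f(x*) + z) is nonempty. -/

import Mathlib

set_option maxHeartbeats 1000000
open scoped RealInnerProductSpace


/-- Core separation lemma: if D is a closed convex set in ℝ × H whose associated
"sup of affine functions" is everywhere (approximately) at least ξ and whose first
coordinates are bounded above, then D contains a point (γ, 0) with γ ≥ ξ. -/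
lemma key_codiff {H : Type*} [NormedAddCommGroup H] [InnerProductSpace ℝ H] [CompleteSpace H]
    (D : Set (ℝ × H)) (hDc : IsClosed D) (hDconv : Convex ℝ D) (ξ M : ℝ)
    (hub : ∀ q ∈ D, q.1 ≤ M)
    (happrox : ∀ Δ : H, ∀ δ : ℝ, 0 < δ → ∃ q ∈ D, ξ - δ < q.1 + ⟪q.2, Δ⟫) :
    ∃ q ∈ D, q.2 = 0 ∧ ξ ≤ q.1 := by
  -- Step 1: for every ε > 0 there is q ∈ D with ‖q.2‖ < ε and ξ - ε < q.1
  have step1 : ∀ ε : ℝ, 0 < ε → ∃ q ∈ D, ‖q.2‖ < ε ∧ ξ - ε < q.1 := by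
    intro ε hε
    by_contra hcon
    push_neg at hcon
    -- D is disjoint from the open convex set U
    set U : Set (ℝ × H) := (Set.Ioi (ξ - ε)) ×ˢ (Metric.ball (0 : H) ε) with hU
    have hdisj : Disjoint U D := by
      rw [Set.disjoint_left]
      rintro ⟨α, u⟩ ⟨h1, h2⟩ hqD
      simp only [Set.mem_Ioi] at h1
      have := hcon (α, u) hqD (by simpa using h2)
      exact absurd h1 (not_lt.2 this)
    obtain ⟨φ, r, hUlt, hDge⟩ := geometric_hahn_banach_open
      (Convex.prod (convex_Ioi _) (convex_ball _ _))
      (IsOpen.prod isOpen_Ioi Metric.isOpen_ball) hDconv hdisj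
    set c : ℝ := φ (1, 0) with hc
    set L : H →L[ℝ] ℝ := φ.comp (ContinuousLinearMap.inr ℝ ℝ H) with hL
    have hφ : ∀ α : ℝ, ∀ u : H, φ (α, u) = α * c + L u := by
      intro α u
      have : (α, u) = α • ((1 : ℝ), (0 : H)) + ((0 : ℝ), u) := by
        simp [Prod.ext_iff]
      rw [this, map_add, map_smul]
      simp [hc, hL, smul_eq_mul]
    have hφ0 : ∀ α : ℝ, φ (α, (0 : H)) = α * c := by
      intro α
      rw [hφ]
      simp only [map_zero, add_zero]
    have hmemU : ∀ α : ℝ, ξ - ε < α → (α, (0 : H)) ∈ U := by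
      intro α hα
      exact ⟨hα, by simpa using hε⟩
    -- c ≤ 0
    have hcle : c ≤ 0 := by
      by_contra hcpos
      push_neg at hcpos
      set α := max (ξ - ε + 1) ((r + 1) / c) with hα
      have h1 : ξ - ε < α := lt_of_lt_of_le (by linarith) (le_max_left _ _)
      have h2 := hUlt _ (hmemU α h1)
      rw [hφ0] at h2
      have h3 : (r + 1) / c ≤ α := le_max_right _ _
      have h4 : r + 1 ≤ α * c := by
        rw [div_le_iff₀ hcpos] at h3; linarith
      linarith
    -- set up Riesz vector
    set y : H := (InnerProductSpace.toDual ℝ H).symm L with hy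
    have hyL : ∀ u : H, ⟪y, u⟫ = L u := fun u => InnerProductSpace.toDual_symm_apply
    rcases lt_or_eq_of_le hcle with hclt | hceq
    · -- case c < 0
      have hrc : r / c < ξ := by
        have h2 := hUlt _ (hmemU (ξ - ε / 2) (by linarith))
        rw [hφ0] at h2
        have h3 : r / c < ξ - ε / 2 := by
          rw [div_lt_iff_of_neg hclt]; linarith
        linarith
      obtain ⟨q, hqD, hq⟩ := happrox (c⁻¹ • y) (ξ - r / c) (by linarith)
      have hd := hDge q hqD
      have hφq : φ q = q.1 * c + L q.2 := by rw [← hφ]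
      have hinner : ⟪q.2, c⁻¹ • y⟫ = c⁻¹ * L q.2 := by
        rw [real_inner_smul_right, real_inner_comm, hyL]
      rw [hinner] at hq
      -- q.1 + c⁻¹ * L q.2 ≤ r / c
      have h5 : r ≤ q.1 * c + L q.2 := by rw [← hφq]; exact hd
      have h6 : q.1 + c⁻¹ * L q.2 ≤ r / c := by
        have hcne : c ≠ 0 := ne_of_lt hclt
        rw [div_eq_mul_inv]
        have := mul_le_mul_of_nonpos_left h5 (le_of_lt (inv_neg''.2 hclt) : c⁻¹ ≤ 0)
        calc q.1 + c⁻¹ * L q.2 = c⁻¹ * (q.1 * c + L q.2) := by field_simp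
          _ ≤ c⁻¹ * r := by
              apply mul_le_mul_of_nonpos_left h5
              exact le_of_lt (inv_neg''.2 hclt)
          _ = r * c⁻¹ := by ring
      linarith
    · -- case c = 0
      have hr0 : 0 < r := by
        have h2 := hUlt _ (hmemU ξ (by linarith))
        rw [hφ0] at h2
        rw [hceq] at h2
        linarith
      set t : ℝ := (M - ξ + 2) / r with ht
      obtain ⟨q, hqD, hq⟩ := happrox (-(t • y)) 1 one_pos
      have hd := hDge q hqD
      have hφq : φ q = q.1 * c + L q.2 := by rw [← hφ]
      have h5 : r ≤ L q.2 := by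
        have h5' : r ≤ q.1 * c + L q.2 := by rw [← hφq]; exact hd
        rw [hceq] at h5'; linarith
      have hinner : ⟪q.2, -(t • y)⟫ = -(t * L q.2) := by
        rw [inner_neg_right, real_inner_smul_right, real_inner_comm, hyL]
      rw [hinner] at hq
      have hqM : q.1 ≤ M := hub q hqD
      -- need M > ξ - 1 first
      have hM : ξ - 1 < M := by
        obtain ⟨q', hq'D, hq'⟩ := happrox 0 1 one_pos
        have := hub q' hq'D
        simp only [inner_zero_right] at hq'
        linarith
      have htpos : 0 < t := div_pos (by linarith) hr0
      have h7 : t * r ≤ t * L q.2 := mul_le_mul_of_nonneg_left h5 (le_of_lt htpos)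
      have h8 : t * r = M - ξ + 2 := by rw [ht]; field_simp [hr0.ne']
      linarith
  -- Step 2: extract a limit point
  choose! q hqD hqn hqv using fun n : ℕ => step1 (1 / (n + 1)) (by positivity)
  have hM : ξ - 1 < M := by
    have := hub (q 0) (hqD 0)
    have := hqv 0
    norm_num at this ⊢
    linarith
  have hmemIcc : ∀ n, (q n).1 ∈ Set.Icc (ξ - 1) M := by
    intro n
    constructor
    · have h1 : (1 : ℝ) / (n + 1) ≤ 1 := by
        rw [div_le_one (by positivity)]; linarith [Nat.cast_nonneg (α := ℝ) n]
      have := hqv n; linarith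
    · exact hub _ (hqD n)
  obtain ⟨γ, hγIcc, ψ, hψmono, hψtend⟩ :=
    (isCompact_Icc (a := ξ - 1) (b := M)).tendsto_subseq hmemIcc
  -- second components tend to 0
  have hv0 : Filter.Tendsto (fun n => (q (ψ n)).2) Filter.atTop (nhds 0) := by
    apply squeeze_zero_norm (a := fun n : ℕ => 1 / (n + 1 : ℝ))
      _ tendsto_one_div_add_atTop_nhds_zero_nat
    intro n
    have h1 : ‖(q (ψ n)).2‖ ≤ 1 / (ψ n + 1 : ℝ) := le_of_lt (hqn (ψ n))
    have h2 : (1 : ℝ) / (ψ n + 1) ≤ 1 / (n + 1) := by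
      apply one_div_le_one_div_of_le (by positivity)
      have : n ≤ ψ n := hψmono.le_apply
      exact_mod_cast add_le_add_left (Nat.cast_le.2 this) 1
    linarith
  have htend : Filter.Tendsto (fun n => q (ψ n)) Filter.atTop (nhds (γ, 0)) := by
    have : (fun n => q (ψ n)) = fun n => ((q (ψ n)).1, (q (ψ n)).2) := by
      funext n; exact rfl
    rw [this]
    exact Filter.Tendsto.prodMk_nhds hψtend hv0
  have hmem : (γ, (0 : H)) ∈ D :=
    hDc.mem_of_tendsto htend (Filter.Eventually.of_forall fun n => hqD (ψ n))
  have hγξ : ξ ≤ γ := by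
    apply le_of_tendsto_of_tendsto' (f := fun n : ℕ => ξ - 1 / (n + 1))
      (g := fun n => (q (ψ n)).1) _ hψtend
    · intro n
      have h1 := hqv (ψ n)
      have h2 : (1 : ℝ) / (ψ n + 1) ≤ 1 / (n + 1) := by
        apply one_div_le_one_div_of_le (by positivity)
        have : n ≤ ψ n := hψmono.le_apply
        exact_mod_cast add_le_add_left (Nat.cast_le.2 this) 1
      linarith
    · have : Filter.Tendsto (fun n : ℕ => ξ - 1 / (n + 1 : ℝ)) Filter.atTop (nhds (ξ - 0)) :=
        Filter.Tendsto.sub tendsto_const_nhds tendsto_one_div_add_atTop_nhds_zero_nat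
      simpa using this
  exact ⟨(γ, 0), hmem, rfl, hγξ⟩



/-- the DC function f = f₁ − f₂ is bounded below iff there exists ξ ∈ ℝ
such that ([ξ, +∞) × {0}) ∩ (d̲f(x*) + z) ≠ ∅ for every z ∈ C. -/
theorem boundedBelow_via_codifferential
    {H : Type*} [NormedAddCommGroup H] [InnerProductSpace ℝ H] [CompleteSpace H]
    (f₁ f₂ : H → ℝ) (S₁ S₂ : Set (ℝ × H))
    (hconv₁ : ConvexOn ℝ Set.univ f₁) (hconv₂ : ConvexOn ℝ Set.univ f₂)
    (hlsc₁ : LowerSemicontinuous f₁) (hlsc₂ : LowerSemicontinuous f₂)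
    (hSclosed₁ : IsClosed S₁) (hSconv₁ : Convex ℝ S₁)
    (hSclosed₂ : IsClosed S₂) (hSconv₂ : Convex ℝ S₂)
    (hrep₁ : ∀ x, ((f₁ x : ℝ) : EReal) = ⨆ p ∈ S₁, ((p.1 + inner ℝ p.2 x : ℝ) : EReal))
    (hrep₂ : ∀ x, ((f₂ x : ℝ) : EReal) = ⨆ p ∈ S₂, ((p.1 + inner ℝ p.2 x : ℝ) : EReal))
    (xs : H) (dl du : Set (ℝ × H))
    (hdl : dl = {q : ℝ × H | ∃ p ∈ S₁, q = (p.1 - f₁ xs + inner ℝ p.2 xs, p.2)})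
    (hdu : du = {q : ℝ × H | ∃ p ∈ S₂, q = (-p.1 + f₂ xs - inner ℝ p.2 xs, -p.2)})
    (C : Set (ℝ × H)) (hCne : C.Nonempty) (hC : C ⊆ du)
    (hCgen : du = closure (convexHull ℝ C)) :
    (∃ c : ℝ, ∀ x, c ≤ f₁ x - f₂ x)
      ↔ ∃ ξ : ℝ, ∀ z ∈ C, ∃ p ∈ dl, (p + z).2 = (0 : H) ∧ ξ ≤ (p + z).1 := by
  have A1 : ∀ p ∈ S₁, ∀ x : H, p.1 + ⟪p.2, x⟫ ≤ f₁ x := by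
    intro p hp x
    have h2 : ((p.1 + inner ℝ p.2 x : ℝ) : EReal) ≤ ((f₁ x : ℝ) : EReal) := by
      rw [hrep₁ x]
      exact le_iSup₂ (f := fun p (_ : p ∈ S₁) => ((p.1 + inner ℝ p.2 x : ℝ) : EReal)) p hp
    exact_mod_cast h2
  have B1 : ∀ p ∈ S₂, ∀ x : H, p.1 + ⟪p.2, x⟫ ≤ f₂ x := by
    intro p hp x
    have h2 : ((p.1 + inner ℝ p.2 x : ℝ) : EReal) ≤ ((f₂ x : ℝ) : EReal) := by
      rw [hrep₂ x]
      exact le_iSup₂ (f := fun p (_ : p ∈ S₂) => ((p.1 + inner ℝ p.2 x : ℝ) : EReal)) p hp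
    exact_mod_cast h2
  have A2 : ∀ (x : H) (δ : ℝ), 0 < δ → ∃ p ∈ S₁, f₁ x - δ < p.1 + ⟪p.2, x⟫ := by
    intro x δ hδ
    by_contra hcon
    push_neg at hcon
    have h2 : (⨆ p ∈ S₁, ((p.1 + inner ℝ p.2 x : ℝ) : EReal)) ≤ ((f₁ x - δ : ℝ) : EReal) :=
      iSup₂_le fun p hp => EReal.coe_le_coe_iff.2 (hcon p hp)
    rw [← hrep₁ x] at h2
    have h3 : f₁ x ≤ f₁ x - δ := EReal.coe_le_coe_iff.1 h2
    linarith
  have B3 : ∀ (x : H) (M : ℝ), (∀ p ∈ S₂, p.1 + ⟪p.2, x⟫ ≤ M) → f₂ x ≤ M := by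
    intro x M hM
    have h2 : (⨆ p ∈ S₂, ((p.1 + inner ℝ p.2 x : ℝ) : EReal)) ≤ ((M : ℝ) : EReal) :=
      iSup₂_le fun p hp => EReal.coe_le_coe_iff.2 (hM p hp)
    rw [← hrep₂ x] at h2
    exact EReal.coe_le_coe_iff.1 h2
  constructor
  · -- forward direction
    rintro ⟨c, hc⟩
    refine ⟨c - f₁ xs + f₂ xs, ?_⟩
    intro z hz
    have hzdu := hC hz
    rw [hdu] at hzdu
    obtain ⟨p₀, hp₀S, rfl⟩ := hzdu
    set z : ℝ × H := (-p₀.1 + f₂ xs - ⟪p₀.2, xs⟫, -p₀.2) with hzdef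
    set D : Set (ℝ × H) := {q : ℝ × H | ∃ p ∈ dl, q = p + z} with hD
    set μ : ℝ × H → ℝ × H :=
      fun q => (q.1 - z.1 + f₁ xs - ⟪q.2 - z.2, xs⟫, q.2 - z.2) with hμ
    have hDeq : D = μ ⁻¹' S₁ := by
      ext q
      simp only [hD, hμ, Set.mem_preimage, Set.mem_setOf_eq, hdl]
      constructor
      · rintro ⟨p, ⟨p₁, hp₁, rfl⟩, rfl⟩
        have heq : ((((p₁.1 - f₁ xs + ⟪p₁.2, xs⟫, p₁.2) : ℝ × H) + z).1 - z.1 + f₁ xs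
            - ⟪((p₁.1 - f₁ xs + ⟪p₁.2, xs⟫, p₁.2) + z).2 - z.2, xs⟫,
            ((p₁.1 - f₁ xs + ⟪p₁.2, xs⟫, p₁.2) + z).2 - z.2) = p₁ := by
          apply Prod.ext
          · simp only [Prod.fst_add, Prod.snd_add, add_sub_cancel_right]
            ring
          · simp only [Prod.snd_add, add_sub_cancel_right]
        rw [heq]
        exact hp₁
      · intro h
        refine ⟨q - z, ⟨_, h, ?_⟩, (sub_add_cancel q z).symm⟩
        apply Prod.ext
        · simp only [Prod.fst_sub, Prod.snd_sub]
          ring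
        · simp only [Prod.snd_sub]
    have hμcont : Continuous μ := by
      apply Continuous.prodMk
      · exact (((continuous_fst.sub continuous_const).add continuous_const).sub
          ((continuous_snd.sub continuous_const).inner continuous_const))
      · exact continuous_snd.sub continuous_const
    have hDclosed : IsClosed D := by
      rw [hDeq]; exact hSclosed₁.preimage hμcont
    have hDconv : Convex ℝ D := by
      rw [hDeq]
      intro q₁ hq₁ q₂ hq₂ a b ha hb hab
      simp only [Set.mem_preimage] at *
      obtain rfl : b = 1 - a := by linarith
      have heq : μ (a • q₁ + (1 - a) • q₂) = a • μ q₁ + (1 - a) • μ q₂ := by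
        apply Prod.ext
        · simp only [hμ, Prod.fst_add, Prod.snd_add, Prod.smul_fst, Prod.smul_snd,
            smul_eq_mul, inner_sub_left, inner_add_left, real_inner_smul_left]
          ring
        · simp only [hμ, Prod.snd_add, Prod.smul_snd]
          module
      rw [heq]
      exact hSconv₁ hq₁ hq₂ ha hb hab
    have hub : ∀ q ∈ D, q.1 ≤ z.1 := by
      rintro q ⟨p, hp, rfl⟩
      rw [hdl] at hp
      obtain ⟨p₁, hp₁, rfl⟩ := hp
      have := A1 p₁ hp₁ xs
      simp only [Prod.fst_add]
      linarith
    have happrox : ∀ Δ : H, ∀ δ : ℝ, 0 < δ →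
        ∃ q ∈ D, (c - f₁ xs + f₂ xs) - δ < q.1 + ⟪q.2, Δ⟫ := by
      intro Δ δ hδ
      obtain ⟨p₁, hp₁, hA⟩ := A2 (xs + Δ) δ hδ
      refine ⟨(p₁.1 - f₁ xs + ⟪p₁.2, xs⟫, p₁.2) + z, ?_, ?_⟩
      · exact ⟨(p₁.1 - f₁ xs + ⟪p₁.2, xs⟫, p₁.2), by rw [hdl]; exact ⟨p₁, hp₁, rfl⟩, rfl⟩
      · have hB := B1 p₀ hp₀S (xs + Δ)
        have hcx := hc (xs + Δ)
        rw [inner_add_right] at hA hB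
        simp only [Prod.fst_add, Prod.snd_add, hzdef, inner_add_left, inner_neg_left]
        linarith
    obtain ⟨q, hqD, hq2, hq1⟩ := key_codiff D hDclosed hDconv (c - f₁ xs + f₂ xs) z.1
      hub happrox
    obtain ⟨p, hp, rfl⟩ := hqD
    exact ⟨p, hp, hq2, hq1⟩
  · -- backward direction
    rintro ⟨ξ, hξ⟩
    refine ⟨ξ + f₁ xs - f₂ xs, ?_⟩
    intro x
    set k : ℝ := ξ - f₁ x + f₁ xs with hk
    set G : Set (ℝ × H) := {z : ℝ × H | k ≤ z.1 + ⟪z.2, x - xs⟫} with hG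
    have hGclosed : IsClosed G := by
      apply isClosed_le continuous_const
      exact continuous_fst.add (continuous_snd.inner continuous_const)
    have hGconv : Convex ℝ G := by
      intro z₁ h₁ z₂ h₂ a b ha hb hab
      simp only [hG, Set.mem_setOf_eq] at *
      simp only [Prod.fst_add, Prod.snd_add, Prod.smul_fst, Prod.smul_snd,
        smul_eq_mul, inner_add_left, real_inner_smul_left]
      have e1 : a * k ≤ a * (z₁.1 + ⟪z₁.2, x - xs⟫) := mul_le_mul_of_nonneg_left h₁ ha
      have e2 : b * k ≤ b * (z₂.1 + ⟪z₂.2, x - xs⟫) := mul_le_mul_of_nonneg_left h₂ hb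
      have e3 : a * k + b * k = k := by rw [← add_mul, hab, one_mul]
      nlinarith [e1, e2, e3]
    have hCG : C ⊆ G := by
      intro z hz
      obtain ⟨p, hp, hsum, hge⟩ := hξ z hz
      rw [hdl] at hp
      obtain ⟨p₁, hp₁, rfl⟩ := hp
      simp only [Prod.snd_add] at hsum
      have hz2 : z.2 = -p₁.2 := by
        have := eq_neg_of_add_eq_zero_right hsum
        exact this
      simp only [Prod.fst_add] at hge
      have hA := A1 p₁ hp₁ x
      simp only [hG, Set.mem_setOf_eq]
      rw [hz2, inner_neg_left, inner_sub_right]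
      linarith
    have hduG : du ⊆ G := by
      rw [hCgen]
      exact closure_minimal (convexHull_min hCG hGconv) hGclosed
    have hf₂ : f₂ x ≤ f₂ xs - k := by
      apply B3
      intro p₀ hp₀
      have hmem : ((-p₀.1 + f₂ xs - ⟪p₀.2, xs⟫, -p₀.2) : ℝ × H) ∈ du := by
        rw [hdu]; exact ⟨p₀, hp₀, rfl⟩
      have := hduG hmem
      simp only [hG, Set.mem_setOf_eq, inner_neg_left, inner_sub_right] at this
      linarith
    linarith [hf₂]
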